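/- arXiv:2009.00488 — 2 statements merged into one kernel-verified Lean document; each statement's English description precedes it below -/
import Mathlib

section
/- Let G and H be simple graphs on finite vertex types, with |V(H)| = n₂, and let G[H] be their lexicographic product. Then for all vertices u of G and v of H, dp_{G[H]}((u,v)) = (∑_{u' ∈ N_G(u)} X^{n₂ · deg_G(u')}) · dp(H) + X^{n₂ · deg_G(u)} · dp_H(v) in ℕ[X]. -/
open Polynomial

/-- The neighbor finset of a vertex (with classical decidability of adjacency). -/
noncomputable def nbhd {V : Type*} [Fintype V] (G : SimpleGraph V) (v : V) : Finset V :=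
  letI := Classical.decRel G.Adj
  G.neighborFinset v

/-- The degree of a vertex (with classical decidability of adjacency). -/
noncomputable def degc {V : Type*} [Fintype V] (G : SimpleGraph V) (v : V) : ℕ :=
  (nbhd G v).card

/-- The degree polynomial of a vertex `v`: the coefficient of `X^i` is the number
of neighbors of `v` having degree `i`. -/
noncomputable def dp {V : Type*} [Fintype V] (G : SimpleGraph V) (v : V) : ℕ[X] :=
  ∑ w ∈ nbhd G v, X ^ degc G w

/-- The degree polynomial of a graph `G`: the coefficient of `X^i` is the number
of vertices of `G` of degree `i`. -/
noncomputable def dpG {V : Type*} [Fintype V] (G : SimpleGraph V) : ℕ[X] :=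
  ∑ v, X ^ degc G v

/-- The lexicographic product `G[H]` of two simple graphs. -/
def lexProd {α β : Type*} (G : SimpleGraph α) (H : SimpleGraph β) :
    SimpleGraph (α × β) where
  Adj x y := G.Adj x.1 y.1 ∨ (x.1 = y.1 ∧ H.Adj x.2 y.2)
  symm := by
    constructor
    rintro ⟨a, b⟩ ⟨c, d⟩ (h | ⟨rfl, h⟩)
    · exact Or.inl h.symm
    · exact Or.inr ⟨rfl, h.symm⟩
  loopless := by
    constructor
    rintro ⟨a, b⟩ (h | ⟨-, h⟩)
    · exact G.loopless.irrefl a h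
    · exact H.loopless.irrefl b h


open Finset

lemma mem_nbhd {V : Type*} [Fintype V] (G : SimpleGraph V) {v w : V} :
    w ∈ nbhd G v ↔ G.Adj v w := by
  classical
  simp [nbhd, SimpleGraph.mem_neighborFinset]

lemma nbhd_lexProd {α β : Type*} [Fintype α] [Fintype β] [DecidableEq α] [DecidableEq β]
    (G : SimpleGraph α) (H : SimpleGraph β) (a : α) (b : β) :
    nbhd (lexProd G H) (a, b)
      = (nbhd G a ×ˢ (univ : Finset β)) ∪ ({a} ×ˢ nbhd H b) := by
  ext ⟨c, d⟩
  simp only [mem_nbhd, Finset.mem_union, Finset.mem_product, Finset.mem_singleton,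
    Finset.mem_univ, and_true, lexProd]
  constructor
  · rintro (h | ⟨rfl, h⟩)
    · exact Or.inl h
    · exact Or.inr ⟨rfl, h⟩
  · rintro (h | ⟨rfl, h⟩)
    · exact Or.inl h
    · exact Or.inr ⟨rfl, h⟩

lemma disj_nbhd_lexProd {α β : Type*} [Fintype α] [Fintype β] [DecidableEq α] [DecidableEq β]
    (G : SimpleGraph α) (H : SimpleGraph β) (a : α) (b : β) :
    Disjoint (nbhd G a ×ˢ (univ : Finset β)) ({a} ×ˢ nbhd H b) := by
  rw [Finset.disjoint_left]
  rintro ⟨c, d⟩ hc hd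
  simp only [Finset.mem_product, Finset.mem_singleton, mem_nbhd] at hc hd
  exact G.loopless.irrefl a (hd.1 ▸ hc.1)

lemma degc_lexProd {α β : Type*} [Fintype α] [Fintype β]
    (G : SimpleGraph α) (H : SimpleGraph β) (a : α) (b : β) :
    degc (lexProd G H) (a, b) = Fintype.card β * degc G a + degc H b := by
  classical
  rw [degc, nbhd_lexProd, Finset.card_union_of_disjoint (disj_nbhd_lexProd G H a b),
    Finset.card_product, Finset.card_product]
  rw [Finset.card_univ, Finset.card_singleton, one_mul, degc, degc, mul_comm]

/-- Degree polynomial of a vertex of the lexicographic product: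
`dp_{G[H]}((u,v)) = (dp_G(u))^{∧×n₂}·dp(H) + X^{n₂·deg u}·dp_H(v)`. -/
theorem dp_lexProd {α β : Type*} [Fintype α] [Fintype β]
    (G : SimpleGraph α) (H : SimpleGraph β) (u : α) (v : β) :
    dp (lexProd G H) (u, v)
      = (∑ u' ∈ nbhd G u, X ^ (Fintype.card β * degc G u')) * dpG H
        + X ^ (Fintype.card β * degc G u) * dp H v := by
  classical
  rw [dp, nbhd_lexProd, Finset.sum_union (disj_nbhd_lexProd G H u v), Finset.sum_product,
    Finset.sum_product, Finset.sum_singleton]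
  congr 1
  · rw [Finset.sum_mul]
    refine Finset.sum_congr rfl fun c _ => ?_
    rw [dpG, Finset.mul_sum]
    exact Finset.sum_congr rfl fun d _ => by rw [degc_lexProd, pow_add]
  · rw [dp, Finset.mul_sum]
    exact Finset.sum_congr rfl fun d _ => by rw [degc_lexProd, pow_add]
end

section
/- There exist two simple graphs G₁ and G₂ on the vertex type Fin 6 that have equal multisets of vertex degrees but different multisets of degree polynomials of vertices; i.e., ∃ G₁ G₂ : SimpleGraph (Fin 6), (the Multiset image of deg_{G₁} over all vertices) = (the Multiset image of deg_{G₂} over all vertices) ∧ (the Multiset image of dp_{G₁} over all vertices) ≠ (the Multiset image of dp_{G₂} over all vertices). -/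
open Polynomial

/-- Path P₆. -/
def GA : SimpleGraph (Fin 6) where
  Adj a b := (a, b) ∈ [((0:Fin 6),(1:Fin 6)),(1,2),(2,3),(3,4),(4,5)] ∨
             (b, a) ∈ [((0:Fin 6),(1:Fin 6)),(1,2),(2,3),(3,4),(4,5)]
  symm := by constructor; decide
  loopless := by constructor; decide

/-- Triangle plus path P₃. -/
def GB : SimpleGraph (Fin 6) where
  Adj a b := (a, b) ∈ [((0:Fin 6),(1:Fin 6)),(1,2),(0,2),(3,4),(4,5)] ∨
             (b, a) ∈ [((0:Fin 6),(1:Fin 6)),(1,2),(0,2),(3,4),(4,5)]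
  symm := by constructor; decide
  loopless := by constructor; decide

instance : DecidableRel GA.Adj := fun _ _ => inferInstanceAs (Decidable (_ ∨ _))
instance : DecidableRel GB.Adj := fun _ _ => inferInstanceAs (Decidable (_ ∨ _))

lemma nbhd_eq {V : Type*} [Fintype V] (G : SimpleGraph V) [DecidableRel G.Adj] (v : V) :
    nbhd G v = G.neighborFinset v := by
  ext w; simp [nbhd, SimpleGraph.mem_neighborFinset]

lemma degc_eq {V : Type*} [Fintype V] (G : SimpleGraph V) [DecidableRel G.Adj] (v : V) :
    degc G v = G.degree v := by
  rw [degc, nbhd_eq]; rfl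

lemma dp_eval {V : Type*} [Fintype V] (G : SimpleGraph V) [DecidableRel G.Adj] (v : V) :
    (dp G v).eval 3 = ∑ w ∈ G.neighborFinset v, 3 ^ G.degree w := by
  simp [dp, nbhd_eq, degc_eq, Polynomial.eval_finset_sum]

/-- There exist two simple graphs on `Fin 6` with equal degree multisets but different
multisets of vertex degree polynomials. -/
theorem exists_same_degree_multiset_different_dp_multiset :
    ∃ G₁ G₂ : SimpleGraph (Fin 6),
      Finset.univ.val.map (degc G₁) = Finset.univ.val.map (degc G₂)
      ∧ Finset.univ.val.map (dp G₁) ≠ Finset.univ.val.map (dp G₂) := by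
  refine ⟨GA, GB, ?_, ?_⟩
  · have h1 : degc GA = fun v => GA.degree v := funext (degc_eq GA)
    have h2 : degc GB = fun v => GB.degree v := funext (degc_eq GB)
    rw [h1, h2]
    decide
  · intro h
    have h' := congrArg (Multiset.map (fun p : ℕ[X] => p.eval 3)) h
    rw [Multiset.map_map, Multiset.map_map] at h'
    have e1 : ((fun p : ℕ[X] => p.eval 3) ∘ dp GA) =
        fun v => ∑ w ∈ GA.neighborFinset v, 3 ^ GA.degree w := funext (dp_eval GA)
    have e2 : ((fun p : ℕ[X] => p.eval 3) ∘ dp GB) =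
        fun v => ∑ w ∈ GB.neighborFinset v, 3 ^ GB.degree w := funext (dp_eval GB)
    rw [e1, e2] at h'
    revert h'
    decide
end
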